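/- Let d ≥ 6 and m = d−3. For every pair of nonnegative integers (u,v) with u+v ≤ 3, the couple (Σ_{m,2,2},(u,v,m+1−u−v)) is realizable, and moreover the couple (Σ_{m,2,2},(0,4,m−3)) is realizable; that is, for each of these eleven triples there exists a hyperbolic polynomial of degree d realizing it. -/

import Mathlib

open Polynomial Finset

/-- A real polynomial `P` of degree `d` defines the sign pattern `Σ_{m,n,q}`:
reading the coefficients from that of `x^d` down to the constant term, the first
`m` are positive, the next `n` are negative and the last `q` are positive
(in particular all `d+1` coefficients are nonzero), where `m + n + q = d + 1`. -/
def SignPatternMNQ (P : Polynomial ℝ) (d m n q : ℕ) : Prop :=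
  m + n + q = d + 1 ∧ 0 < m ∧ 0 < n ∧ 0 < q ∧
  (∀ k, k ≤ d → (d - k < m ∨ m + n ≤ d - k) → 0 < P.coeff k) ∧
  (∀ k, k ≤ d → (m ≤ d - k ∧ d - k < m + n) → P.coeff k < 0)

/-- The couple `(Σ_{m,n,q}, (u,v,w))` is realizable (in degree `d`): there is a
hyperbolic polynomial `P` of degree `d` defining the sign pattern `Σ_{m,n,q}`,
whose roots are exactly two positive numbers `β < α` together with `d - 2`
negative numbers `-γ i`, all moduli being distinct, such that exactly `u` of
the `γ i` are `< β`, exactly `v` lie in `(β, α)` and exactly `w` are `> α`. -/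
def RealizesCouple (d m n q u v w : ℕ) : Prop :=
  ∃ (P : Polynomial ℝ) (α β : ℝ) (γ : Fin (d - 2) → ℝ),
    P.natDegree = d ∧
    SignPatternMNQ P d m n q ∧
    0 < β ∧ β < α ∧
    StrictMono γ ∧ (∀ i, 0 < γ i) ∧ (∀ i, γ i ≠ β ∧ γ i ≠ α) ∧
    P.roots = (α ::ₘ β ::ₘ Multiset.map (fun i => -γ i) Finset.univ.val) ∧
    (Finset.univ.filter (fun i => γ i < β)).card = u ∧
    (Finset.univ.filter (fun i => β < γ i ∧ γ i < α)).card = v ∧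
    (Finset.univ.filter (fun i => α < γ i)).card = w


lemma base_coeffs (a b g1 g2 g3 g4 : ℝ) :
    (X - C a) * (X - C b) * (X - C (-g1)) * (X - C (-g2)) * (X - C (-g3)) * (X - C (-g4))
    = C (a*b*(g1*g2*g3*g4))
      + C (-((a+b)*(g1*g2*g3*g4)) + a*b*(g1*g2*g3+g1*g2*g4+g1*g3*g4+g2*g3*g4)) * X
      + C (g1*g2*g3*g4 - (a+b)*(g1*g2*g3+g1*g2*g4+g1*g3*g4+g2*g3*g4)
            + a*b*(g1*g2+g1*g3+g1*g4+g2*g3+g2*g4+g3*g4)) * X^2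
      + C ((g1*g2*g3+g1*g2*g4+g1*g3*g4+g2*g3*g4)
            - (a+b)*(g1*g2+g1*g3+g1*g4+g2*g3+g2*g4+g3*g4) + a*b*(g1+g2+g3+g4)) * X^3
      + C ((g1*g2+g1*g3+g1*g4+g2*g3+g2*g4+g3*g4) - (a+b)*(g1+g2+g3+g4) + a*b) * X^4
      + C (g1+g2+g3+g4 - (a+b)) * X^5 + X^6 := by
  simp only [map_mul, map_add, map_neg, map_sub]
  ring

lemma mono4 (g1 g2 g3 g4 : ℝ) (h12 : g1 < g2) (h23 : g2 < g3) (h34 : g3 < g4) :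
    StrictMono ![g1,g2,g3,g4] := by
  intro i j hij
  fin_cases i <;> fin_cases j <;> simp_all <;> linarith

lemma ne4 (a b g1 g2 g3 g4 : ℝ) (h1 : g1 ≠ b) (h1' : g1 ≠ a) (h2 : g2 ≠ b) (h2' : g2 ≠ a)
    (h3 : g3 ≠ b) (h3' : g3 ≠ a) (h4 : g4 ≠ b) (h4' : g4 ≠ a) :
    ∀ i : Fin 4, ![g1,g2,g3,g4] i ≠ b ∧ ![g1,g2,g3,g4] i ≠ a := by
  intro i; fin_cases i <;> simp_all

lemma signPattern6 (P : ℝ[X]) (h0 : 0 < P.coeff 0) (h1 : 0 < P.coeff 1)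
    (h2 : P.coeff 2 < 0) (h3 : P.coeff 3 < 0) (h4 : 0 < P.coeff 4) (h5 : 0 < P.coeff 5)
    (h6 : 0 < P.coeff 6) : SignPatternMNQ P 6 3 2 2 := by
  refine ⟨rfl, by norm_num, by norm_num, by norm_num, ?_, ?_⟩ <;>
    intro k hk hcond <;> interval_cases k <;> first | assumption | omega

lemma assemble (u v w : ℕ) (a b : ℝ) (g : Fin 4 → ℝ) (c0 c1 c2 c3 c4 c5 : ℝ)
    (hb : 0 < b) (hba : b < a) (hg0 : 0 < g 0) (hmono : StrictMono g)
    (hne : ∀ i, g i ≠ b ∧ g i ≠ a)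
    (hP : (X - C a) * (X - C b) * (X - C (-g 0)) * (X - C (-g 1)) * (X - C (-g 2)) * (X - C (-g 3))
        = C c0 + C c1*X + C c2*X^2 + C c3*X^3 + C c4*X^4 + C c5*X^5 + X^6)
    (h0 : 0 < c0) (h1 : 0 < c1) (h2 : c2 < 0) (h3 : c3 < 0) (h4 : 0 < c4) (h5 : 0 < c5)
    (hu : ((univ : Finset (Fin 4)).filter (fun i => g i < b)).card = u)
    (hv : ((univ : Finset (Fin 4)).filter (fun i => b < g i ∧ g i < a)).card = v)
    (hw : ((univ : Finset (Fin 4)).filter (fun i => a < g i)).card = w) :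
    RealizesCouple 6 3 2 2 u v w := by
  have hgpos : ∀ i, 0 < g i := fun i => lt_of_lt_of_le hg0 (hmono.monotone (Fin.zero_le i))
  refine ⟨(X - C a) * (X - C b) * (X - C (-g 0)) * (X - C (-g 1)) * (X - C (-g 2)) * (X - C (-g 3)),
    a, b, g, ?_, ?_, hb, hba, hmono, hgpos, hne, ?_, hu, hv, hw⟩
  · rw [hP]; compute_degree!
  · refine signPattern6 _ ?_ ?_ ?_ ?_ ?_ ?_ ?_ <;> rw [hP] <;>
      simp only [coeff_add, coeff_C_mul, coeff_X_pow, coeff_C, coeff_X, coeff_one] <;>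
      norm_num <;> assumption
  · have k1 : (X - C a) * (X - C b) ≠ (0:ℝ[X]) :=
      mul_ne_zero (X_sub_C_ne_zero a) (X_sub_C_ne_zero b)
    have k2 := mul_ne_zero k1 (X_sub_C_ne_zero (-g 0))
    have k3 := mul_ne_zero k2 (X_sub_C_ne_zero (-g 1))
    have k4 := mul_ne_zero k3 (X_sub_C_ne_zero (-g 2))
    rw [roots_mul (mul_ne_zero k4 (X_sub_C_ne_zero (-g 3))), roots_mul k4, roots_mul k3,
      roots_mul k2, roots_mul k1, roots_X_sub_C, roots_X_sub_C, roots_X_sub_C, roots_X_sub_C,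
      roots_X_sub_C, roots_X_sub_C]
    rfl

lemma univ_eq_insert_last (n : ℕ) :
    (univ : Finset (Fin (n+1))) = insert (Fin.last n) ((univ : Finset (Fin n)).map Fin.castSuccEmb) := by
  ext i
  simp only [mem_univ, mem_insert, mem_map, Fin.castSuccEmb_apply, true_iff]
  rcases Fin.eq_castSucc_or_eq_last i with ⟨j, rfl⟩ | rfl
  · exact Or.inr ⟨j, trivial, rfl⟩
  · exact Or.inl rfl

lemma last_not_mem (n : ℕ) : Fin.last n ∉ (univ : Finset (Fin n)).map Fin.castSuccEmb := by
  simp only [mem_map, Fin.castSuccEmb_apply, not_exists]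
  rintro j ⟨-, hj⟩
  exact absurd hj (Fin.castSucc_lt_last j).ne

lemma card_filter_castSucc {n : ℕ} (p : Fin (n+1) → Prop) [DecidablePred p] :
    ((univ : Finset (Fin (n+1))).filter p).card
      = ((univ : Finset (Fin n)).filter (fun i => p i.castSucc)).card
        + (if p (Fin.last n) then 1 else 0) := by
  rw [univ_eq_insert_last, filter_insert]
  split_ifs
  · rw [card_insert_of_notMem (fun hmem => last_not_mem n (filter_subset _ _ hmem)),
      filter_map, card_map]
    rfl
  · rw [filter_map, card_map]
    rfl

lemma map_univ_castSucc {n : ℕ} (f : Fin (n+1) → ℝ) :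
    Multiset.map f (univ : Finset (Fin (n+1))).val
      = f (Fin.last n) ::ₘ Multiset.map (fun i => f i.castSucc) (univ : Finset (Fin n)).val := by
  rw [univ_eq_insert_last, insert_val_of_notMem (last_not_mem n), Multiset.map_cons,
    map_val, Multiset.map_map]
  rfl

lemma snoc_strictMono {n : ℕ} {γ : Fin n → ℝ} {g : ℝ} (hmono : StrictMono γ)
    (hg : ∀ i, γ i < g) : StrictMono (Fin.snoc γ g) := by
  intro i j hij
  rcases Fin.eq_castSucc_or_eq_last j with ⟨j', rfl⟩ | rfl
  · rcases Fin.eq_castSucc_or_eq_last i with ⟨i', rfl⟩ | rfl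
    · simpa [Fin.snoc_castSucc] using hmono (Fin.castSucc_lt_castSucc_iff.mp hij)
    · exact absurd hij (by simp [Fin.lt_iff_val_lt_val])
  · rcases Fin.eq_castSucc_or_eq_last i with ⟨i', rfl⟩ | rfl
    · simpa [Fin.snoc_castSucc, Fin.snoc_last] using hg i'
    · exact absurd hij (lt_irrefl _)

lemma step (n u v w : ℕ) (h : RealizesCouple (n+6) (n+3) 2 2 u v w) :
    RealizesCouple (n+7) (n+4) 2 2 u v (w+1) := by
  obtain ⟨P, α, β, γ, hdeg, ⟨-, -, -, -, hSP, hSN⟩, hb, hba, hmono, hpos, hne, hroots,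
    hu, hv, hw⟩ := h
  have hmono' : StrictMono (γ : Fin (n+4) → ℝ) := hmono
  have hpos' : ∀ i : Fin (n+4), 0 < γ i := hpos
  have hne' : ∀ i : Fin (n+4), γ i ≠ β ∧ γ i ≠ α := hne
  have hroots' : P.roots
      = α ::ₘ β ::ₘ Multiset.map (fun i : Fin (n+4) => -γ i) (univ : Finset (Fin (n+4))).val :=
    hroots
  have hu' : ((univ : Finset (Fin (n+4))).filter (fun i => γ i < β)).card = u := hu
  have hv' : ((univ : Finset (Fin (n+4))).filter (fun i => β < γ i ∧ γ i < α)).card = v := hv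
  have hw' : ((univ : Finset (Fin (n+4))).filter (fun i => α < γ i)).card = w := hw
  have hcpos : ∀ k, k ≤ n+6 → (k ≤ 1 ∨ 4 ≤ k) → 0 < P.coeff k := by
    intro k hk hk'; exact hSP k hk (by omega)
  have hc2 : P.coeff 2 < 0 := hSN 2 (by omega) (by omega)
  have hc3 : P.coeff 3 < 0 := hSN 3 (by omega) (by omega)
  have hc0 : 0 < P.coeff 0 := hcpos 0 (by omega) (by omega)
  have hc1 : 0 < P.coeff 1 := hcpos 1 (by omega) (by omega)
  have hc4 : 0 < P.coeff 4 := hcpos 4 (by omega) (by omega)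
  set g : ℝ := max (max (α+1) (γ (Fin.last (n+3)) + 1))
      (max (P.coeff 1 / (-P.coeff 2) + 1) (-P.coeff 3 / P.coeff 4 + 1)) with hgdef
  have hgα : α < g := lt_of_lt_of_le (lt_add_one α)
    (le_trans (le_max_left _ _) (le_max_left _ _))
  have hgγ : ∀ i : Fin (n+4), γ i < g := by
    intro i
    have h1 : γ i ≤ γ (Fin.last (n+3)) := hmono'.monotone (Fin.le_last i)
    have h2 : γ (Fin.last (n+3)) + 1 ≤ g :=
      le_trans (le_max_right _ _) (le_max_left _ _)
    linarith
  have hg0 : 0 < g := lt_trans (lt_trans hb hba) hgα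
  have key2 : P.coeff 1 + g * P.coeff 2 < 0 := by
    have h1 : P.coeff 1 / (-P.coeff 2) + 1 ≤ g :=
      le_trans (le_max_left _ _) (le_max_right _ _)
    have h2 : P.coeff 1 / (-P.coeff 2) < g := by linarith
    have := (div_lt_iff₀ (neg_pos.mpr hc2)).mp h2
    linarith
  have key4 : 0 < P.coeff 3 + g * P.coeff 4 := by
    have h1 : -P.coeff 3 / P.coeff 4 + 1 ≤ g :=
      le_trans (le_max_right _ _) (le_max_right _ _)
    have h2 : -P.coeff 3 / P.coeff 4 < g := by linarith
    have := (div_lt_iff₀ hc4).mp h2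
    linarith
  have hP0 : P ≠ 0 := by
    intro hz; rw [hz, natDegree_zero] at hdeg; omega
  have hQeq : X + C g = X - C (-g) := by rw [map_neg, sub_neg_eq_add]
  have hQ0 : X + C g ≠ (0 : ℝ[X]) := by rw [hQeq]; exact X_sub_C_ne_zero (-g)
  have hcoeff : ∀ k : ℕ, (P * (X + C g)).coeff (k+1) = P.coeff k + g * P.coeff (k+1) := by
    intro k
    have h : P * (X + C g) = P * X + C g * P := by ring
    rw [h, coeff_add, coeff_mul_X, coeff_C_mul]
  have hcoeff0 : (P * (X + C g)).coeff 0 = g * P.coeff 0 := by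
    rw [mul_coeff_zero, coeff_add, coeff_X_zero, coeff_C_zero, zero_add, mul_comm]
  have htop : P.coeff (n+7) = 0 :=
    coeff_eq_zero_of_natDegree_lt (by omega)
  refine ⟨P * (X + C g), α, β, @Fin.snoc (n+4) (fun _ => ℝ) γ g, ?_, ?_, hb, hba,
    snoc_strictMono hmono' hgγ, ?_, ?_, ?_, ?_, ?_, ?_⟩
  · rw [natDegree_mul hP0 hQ0, hdeg, hQeq, natDegree_X_sub_C]
  · refine ⟨by omega, by omega, by omega, by omega, ?_, ?_⟩
    · intro k hk hcond
      have hk' : k ≤ 1 ∨ 4 ≤ k := by omega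
      rcases hk' with hk1 | hk4
      · interval_cases k
        · rw [hcoeff0]; exact mul_pos hg0 hc0
        · show (0:ℝ) < (P * (X + C g)).coeff (0+1)
          rw [hcoeff]; exact add_pos hc0 (mul_pos hg0 hc1)
      · obtain ⟨j, rfl⟩ : ∃ j, k = j + 1 := ⟨k - 1, by omega⟩
        rw [hcoeff]
        rcases Nat.lt_or_ge (j+1) (n+7) with hlt | hge
        · rcases Nat.eq_or_lt_of_le hk4 with he | hgt
          · obtain rfl : j = 3 := by omega
            exact key4
          · exact add_pos (hcpos j (by omega) (by omega))
              (mul_pos hg0 (hcpos (j+1) (by omega) (by omega)))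
        · rw [show j + 1 = n + 7 by omega, htop, mul_zero, add_zero]
          exact hcpos j (by omega) (by omega)
    · intro k hk hcond
      have hk' : k = 2 ∨ k = 3 := by omega
      rcases hk' with rfl | rfl
      · show (P * (X + C g)).coeff (1+1) < (0:ℝ)
        rw [hcoeff]; exact key2
      · show (P * (X + C g)).coeff (2+1) < (0:ℝ)
        rw [hcoeff]
        have : g * P.coeff 3 < 0 := mul_neg_of_pos_of_neg hg0 hc3
        linarith
  · intro i
    rcases Fin.eq_castSucc_or_eq_last i with ⟨j, rfl⟩ | rfl
    · rw [Fin.snoc_castSucc]; exact hpos' j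
    · rw [Fin.snoc_last]; exact hg0
  · intro i
    rcases Fin.eq_castSucc_or_eq_last i with ⟨j, rfl⟩ | rfl
    · rw [Fin.snoc_castSucc]; exact hne' j
    · rw [Fin.snoc_last]
      exact ⟨(lt_trans hba hgα).ne', hgα.ne'⟩
  · show (P * (X + C g)).roots
        = α ::ₘ β ::ₘ Multiset.map (fun i : Fin (n+4+1) => -(@Fin.snoc (n+4) (fun _ => ℝ) γ g i))
            (univ : Finset (Fin (n+4+1))).val
    rw [roots_mul (mul_ne_zero hP0 hQ0), hroots', hQeq, roots_X_sub_C,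
      map_univ_castSucc (fun i : Fin (n+4+1) => -(@Fin.snoc (n+4) (fun _ => ℝ) γ g i))]
    simp only [Fin.snoc_last, Fin.snoc_castSucc]
    conv_lhs => rw [add_comm]
    rw [Multiset.singleton_add, Multiset.cons_swap (-g) α, Multiset.cons_swap (-g) β]
  · show ((univ : Finset (Fin (n+4+1))).filter
        (fun i => @Fin.snoc (n+4) (fun _ => ℝ) γ g i < β)).card = u
    rw [card_filter_castSucc (fun i : Fin (n+4+1) => @Fin.snoc (n+4) (fun _ => ℝ) γ g i < β)]
    simp only [Fin.snoc_castSucc, Fin.snoc_last]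
    rw [if_neg (by push_neg; exact le_of_lt (lt_trans hba hgα)), add_zero]
    exact hu'
  · show ((univ : Finset (Fin (n+4+1))).filter
        (fun i => β < @Fin.snoc (n+4) (fun _ => ℝ) γ g i ∧ @Fin.snoc (n+4) (fun _ => ℝ) γ g i < α)).card = v
    rw [card_filter_castSucc
      (fun i : Fin (n+4+1) => β < @Fin.snoc (n+4) (fun _ => ℝ) γ g i ∧ @Fin.snoc (n+4) (fun _ => ℝ) γ g i < α)]
    simp only [Fin.snoc_castSucc, Fin.snoc_last]
    rw [if_neg (fun hcon => absurd hcon.2 (not_lt.mpr (le_of_lt hgα))), add_zero]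
    exact hv'
  · show ((univ : Finset (Fin (n+4+1))).filter
        (fun i => α < @Fin.snoc (n+4) (fun _ => ℝ) γ g i)).card = w + 1
    rw [card_filter_castSucc (fun i : Fin (n+4+1) => α < @Fin.snoc (n+4) (fun _ => ℝ) γ g i)]
    simp only [Fin.snoc_castSucc, Fin.snoc_last]
    rw [if_pos hgα]
    exact congrArg (· + 1) hw'

lemma inst_0_0_4 : RealizesCouple 6 3 2 2 0 0 4 := by
  refine assemble 0 0 4 (5/2) (7/3) ![(11/4), (10/3), (5), (9)] (9625/4) (25325/72) (-5745/8) (-3701/24) (3463/72) (61/4)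
    (by norm_num) (by norm_num) (by norm_num) ?_ ?_ ?_
    (by norm_num) (by norm_num) (by norm_num) (by norm_num) (by norm_num) (by norm_num)
    ?_ ?_ ?_
  · exact mono4 _ _ _ _ (by norm_num) (by norm_num) (by norm_num)
  · exact ne4 _ _ _ _ _ _ (by norm_num) (by norm_num) (by norm_num) (by norm_num)
      (by norm_num) (by norm_num) (by norm_num) (by norm_num)
  · show (X - C (5/2)) * (X - C (7/3)) * (X - C (-(11/4))) * (X - C (-(10/3)))
      * (X - C (-(5))) * (X - C (-(9))) = _
    rw [base_coeffs]; norm_num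
  · rw [Finset.card_filter, Fin.sum_univ_four]; norm_num [Matrix.cons_val_two, Matrix.cons_val_three]
  · rw [Finset.card_filter, Fin.sum_univ_four]; norm_num [Matrix.cons_val_two, Matrix.cons_val_three]
  · rw [Finset.card_filter, Fin.sum_univ_four]; norm_num [Matrix.cons_val_two, Matrix.cons_val_three]

lemma inst_0_1_3 : RealizesCouple 6 3 2 2 0 1 3 := by
  refine assemble 0 1 3 (4) (1) ![(4/3), (5), (11/2), (6)] (880) (128/3) (-2275/3) (-411/2) (82/3) (77/6)
    (by norm_num) (by norm_num) (by norm_num) ?_ ?_ ?_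
    (by norm_num) (by norm_num) (by norm_num) (by norm_num) (by norm_num) (by norm_num)
    ?_ ?_ ?_
  · exact mono4 _ _ _ _ (by norm_num) (by norm_num) (by norm_num)
  · exact ne4 _ _ _ _ _ _ (by norm_num) (by norm_num) (by norm_num) (by norm_num)
      (by norm_num) (by norm_num) (by norm_num) (by norm_num)
  · show (X - C (4)) * (X - C (1)) * (X - C (-(4/3))) * (X - C (-(5)))
      * (X - C (-(11/2))) * (X - C (-(6))) = _
    rw [base_coeffs]; norm_num
  · rw [Finset.card_filter, Fin.sum_univ_four]; norm_num [Matrix.cons_val_two, Matrix.cons_val_three]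
  · rw [Finset.card_filter, Fin.sum_univ_four]; norm_num [Matrix.cons_val_two, Matrix.cons_val_three]
  · rw [Finset.card_filter, Fin.sum_univ_four]; norm_num [Matrix.cons_val_two, Matrix.cons_val_three]

lemma inst_0_2_2 : RealizesCouple 6 3 2 2 0 2 2 := by
  refine assemble 0 2 2 (4/3) (1/3) ![(1/2), (1), (3/2), (11/3)] (11/9) (25/108) (-331/36) (-985/108) (37/12) (5)
    (by norm_num) (by norm_num) (by norm_num) ?_ ?_ ?_
    (by norm_num) (by norm_num) (by norm_num) (by norm_num) (by norm_num) (by norm_num)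
    ?_ ?_ ?_
  · exact mono4 _ _ _ _ (by norm_num) (by norm_num) (by norm_num)
  · exact ne4 _ _ _ _ _ _ (by norm_num) (by norm_num) (by norm_num) (by norm_num)
      (by norm_num) (by norm_num) (by norm_num) (by norm_num)
  · show (X - C (4/3)) * (X - C (1/3)) * (X - C (-(1/2))) * (X - C (-(1)))
      * (X - C (-(3/2))) * (X - C (-(11/3))) = _
    rw [base_coeffs]; norm_num
  · rw [Finset.card_filter, Fin.sum_univ_four]; norm_num [Matrix.cons_val_two, Matrix.cons_val_three]
  · rw [Finset.card_filter, Fin.sum_univ_four]; norm_num [Matrix.cons_val_two, Matrix.cons_val_three]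
  · rw [Finset.card_filter, Fin.sum_univ_four]; norm_num [Matrix.cons_val_two, Matrix.cons_val_three]

lemma inst_0_3_1 : RealizesCouple 6 3 2 2 0 3 1 := by
  refine assemble 0 3 1 (3/2) (1/3) ![(1/2), (1), (4/3), (11/3)] (11/9) (47/108) (-329/36) (-1139/108) (53/36) (14/3)
    (by norm_num) (by norm_num) (by norm_num) ?_ ?_ ?_
    (by norm_num) (by norm_num) (by norm_num) (by norm_num) (by norm_num) (by norm_num)
    ?_ ?_ ?_
  · exact mono4 _ _ _ _ (by norm_num) (by norm_num) (by norm_num)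
  · exact ne4 _ _ _ _ _ _ (by norm_num) (by norm_num) (by norm_num) (by norm_num)
      (by norm_num) (by norm_num) (by norm_num) (by norm_num)
  · show (X - C (3/2)) * (X - C (1/3)) * (X - C (-(1/2))) * (X - C (-(1)))
      * (X - C (-(4/3))) * (X - C (-(11/3))) = _
    rw [base_coeffs]; norm_num
  · rw [Finset.card_filter, Fin.sum_univ_four]; norm_num [Matrix.cons_val_two, Matrix.cons_val_three]
  · rw [Finset.card_filter, Fin.sum_univ_four]; norm_num [Matrix.cons_val_two, Matrix.cons_val_three]
  · rw [Finset.card_filter, Fin.sum_univ_four]; norm_num [Matrix.cons_val_two, Matrix.cons_val_three]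

lemma inst_0_4_0 : RealizesCouple 6 3 2 2 0 4 0 := by
  refine assemble 0 4 0 (9) (5/2) ![(6), (22/3), (31/4), (26/3)] (66495) (14497/6) (-296069/36) (-12067/8) (751/72) (73/4)
    (by norm_num) (by norm_num) (by norm_num) ?_ ?_ ?_
    (by norm_num) (by norm_num) (by norm_num) (by norm_num) (by norm_num) (by norm_num)
    ?_ ?_ ?_
  · exact mono4 _ _ _ _ (by norm_num) (by norm_num) (by norm_num)
  · exact ne4 _ _ _ _ _ _ (by norm_num) (by norm_num) (by norm_num) (by norm_num)
      (by norm_num) (by norm_num) (by norm_num) (by norm_num)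
  · show (X - C (9)) * (X - C (5/2)) * (X - C (-(6))) * (X - C (-(22/3)))
      * (X - C (-(31/4))) * (X - C (-(26/3))) = _
    rw [base_coeffs]; norm_num
  · rw [Finset.card_filter, Fin.sum_univ_four]; norm_num [Matrix.cons_val_two, Matrix.cons_val_three]
  · rw [Finset.card_filter, Fin.sum_univ_four]; norm_num [Matrix.cons_val_two, Matrix.cons_val_three]
  · rw [Finset.card_filter, Fin.sum_univ_four]; norm_num [Matrix.cons_val_two, Matrix.cons_val_three]

lemma inst_1_0_3 : RealizesCouple 6 3 2 2 1 0 3 := by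
  refine assemble 1 0 3 (1) (1/2) ![(1/3), (4/3), (3/2), (11/3)] (11/9) (223/108) (-269/36) (-751/108) (173/36) (16/3)
    (by norm_num) (by norm_num) (by norm_num) ?_ ?_ ?_
    (by norm_num) (by norm_num) (by norm_num) (by norm_num) (by norm_num) (by norm_num)
    ?_ ?_ ?_
  · exact mono4 _ _ _ _ (by norm_num) (by norm_num) (by norm_num)
  · exact ne4 _ _ _ _ _ _ (by norm_num) (by norm_num) (by norm_num) (by norm_num)
      (by norm_num) (by norm_num) (by norm_num) (by norm_num)
  · show (X - C (1)) * (X - C (1/2)) * (X - C (-(1/3))) * (X - C (-(4/3)))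
      * (X - C (-(3/2))) * (X - C (-(11/3))) = _
    rw [base_coeffs]; norm_num
  · rw [Finset.card_filter, Fin.sum_univ_four]; norm_num [Matrix.cons_val_two, Matrix.cons_val_three]
  · rw [Finset.card_filter, Fin.sum_univ_four]; norm_num [Matrix.cons_val_two, Matrix.cons_val_three]
  · rw [Finset.card_filter, Fin.sum_univ_four]; norm_num [Matrix.cons_val_two, Matrix.cons_val_three]

lemma inst_1_1_2 : RealizesCouple 6 3 2 2 1 1 2 := by
  refine assemble 1 1 2 (4/3) (1/2) ![(1/3), (1), (3/2), (11/3)] (11/9) (289/108) (-679/108) (-1073/108) (53/36) (14/3)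
    (by norm_num) (by norm_num) (by norm_num) ?_ ?_ ?_
    (by norm_num) (by norm_num) (by norm_num) (by norm_num) (by norm_num) (by norm_num)
    ?_ ?_ ?_
  · exact mono4 _ _ _ _ (by norm_num) (by norm_num) (by norm_num)
  · exact ne4 _ _ _ _ _ _ (by norm_num) (by norm_num) (by norm_num) (by norm_num)
      (by norm_num) (by norm_num) (by norm_num) (by norm_num)
  · show (X - C (4/3)) * (X - C (1/2)) * (X - C (-(1/3))) * (X - C (-(1)))
      * (X - C (-(3/2))) * (X - C (-(11/3))) = _
    rw [base_coeffs]; norm_num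
  · rw [Finset.card_filter, Fin.sum_univ_four]; norm_num [Matrix.cons_val_two, Matrix.cons_val_three]
  · rw [Finset.card_filter, Fin.sum_univ_four]; norm_num [Matrix.cons_val_two, Matrix.cons_val_three]
  · rw [Finset.card_filter, Fin.sum_univ_four]; norm_num [Matrix.cons_val_two, Matrix.cons_val_three]

lemma inst_1_2_1 : RealizesCouple 6 3 2 2 1 2 1 := by
  refine assemble 1 2 1 (16/3) (1) ![(1/2), (4), (5), (12)] (640) (2584/3) (-3200/3) (-917/2) (23/3) (91/6)
    (by norm_num) (by norm_num) (by norm_num) ?_ ?_ ?_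
    (by norm_num) (by norm_num) (by norm_num) (by norm_num) (by norm_num) (by norm_num)
    ?_ ?_ ?_
  · exact mono4 _ _ _ _ (by norm_num) (by norm_num) (by norm_num)
  · exact ne4 _ _ _ _ _ _ (by norm_num) (by norm_num) (by norm_num) (by norm_num)
      (by norm_num) (by norm_num) (by norm_num) (by norm_num)
  · show (X - C (16/3)) * (X - C (1)) * (X - C (-(1/2))) * (X - C (-(4)))
      * (X - C (-(5))) * (X - C (-(12))) = _
    rw [base_coeffs]; norm_num
  · rw [Finset.card_filter, Fin.sum_univ_four]; norm_num [Matrix.cons_val_two, Matrix.cons_val_three]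
  · rw [Finset.card_filter, Fin.sum_univ_four]; norm_num [Matrix.cons_val_two, Matrix.cons_val_three]
  · rw [Finset.card_filter, Fin.sum_univ_four]; norm_num [Matrix.cons_val_two, Matrix.cons_val_three]

lemma inst_2_0_2 : RealizesCouple 6 3 2 2 2 0 2 := by
  refine assemble 2 0 2 (5) (3/2) ![(1), (4/3), (8), (11)] (880) (2902/3) (-759/2) (-2869/6) (5/2) (89/6)
    (by norm_num) (by norm_num) (by norm_num) ?_ ?_ ?_
    (by norm_num) (by norm_num) (by norm_num) (by norm_num) (by norm_num) (by norm_num)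
    ?_ ?_ ?_
  · exact mono4 _ _ _ _ (by norm_num) (by norm_num) (by norm_num)
  · exact ne4 _ _ _ _ _ _ (by norm_num) (by norm_num) (by norm_num) (by norm_num)
      (by norm_num) (by norm_num) (by norm_num) (by norm_num)
  · show (X - C (5)) * (X - C (3/2)) * (X - C (-(1))) * (X - C (-(4/3)))
      * (X - C (-(8))) * (X - C (-(11))) = _
    rw [base_coeffs]; norm_num
  · rw [Finset.card_filter, Fin.sum_univ_four]; norm_num [Matrix.cons_val_two, Matrix.cons_val_three]
  · rw [Finset.card_filter, Fin.sum_univ_four]; norm_num [Matrix.cons_val_two, Matrix.cons_val_three]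
  · rw [Finset.card_filter, Fin.sum_univ_four]; norm_num [Matrix.cons_val_two, Matrix.cons_val_three]

lemma inst_2_1_1 : RealizesCouple 6 3 2 2 2 1 1 := by
  refine assemble 2 1 1 (4) (10/3) ![(3/2), (13/4), (7/2), (33)] (15015/2) (44467/8) (-40723/48) (-42125/48) (55/12) (407/12)
    (by norm_num) (by norm_num) (by norm_num) ?_ ?_ ?_
    (by norm_num) (by norm_num) (by norm_num) (by norm_num) (by norm_num) (by norm_num)
    ?_ ?_ ?_
  · exact mono4 _ _ _ _ (by norm_num) (by norm_num) (by norm_num)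
  · exact ne4 _ _ _ _ _ _ (by norm_num) (by norm_num) (by norm_num) (by norm_num)
      (by norm_num) (by norm_num) (by norm_num) (by norm_num)
  · show (X - C (4)) * (X - C (10/3)) * (X - C (-(3/2))) * (X - C (-(13/4)))
      * (X - C (-(7/2))) * (X - C (-(33))) = _
    rw [base_coeffs]; norm_num
  · rw [Finset.card_filter, Fin.sum_univ_four]; norm_num [Matrix.cons_val_two, Matrix.cons_val_three]
  · rw [Finset.card_filter, Fin.sum_univ_four]; norm_num [Matrix.cons_val_two, Matrix.cons_val_three]
  · rw [Finset.card_filter, Fin.sum_univ_four]; norm_num [Matrix.cons_val_two, Matrix.cons_val_three]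

lemma inst_3_0_1 : RealizesCouple 6 3 2 2 3 0 1 := by
  refine assemble 3 0 1 (4) (7/2) ![(8/3), (13/4), (10/3), (42)] (50960/3) (71974/9) (-37969/18) (-21383/18) (3349/72) (175/4)
    (by norm_num) (by norm_num) (by norm_num) ?_ ?_ ?_
    (by norm_num) (by norm_num) (by norm_num) (by norm_num) (by norm_num) (by norm_num)
    ?_ ?_ ?_
  · exact mono4 _ _ _ _ (by norm_num) (by norm_num) (by norm_num)
  · exact ne4 _ _ _ _ _ _ (by norm_num) (by norm_num) (by norm_num) (by norm_num)
      (by norm_num) (by norm_num) (by norm_num) (by norm_num)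
  · show (X - C (4)) * (X - C (7/2)) * (X - C (-(8/3))) * (X - C (-(13/4)))
      * (X - C (-(10/3))) * (X - C (-(42))) = _
    rw [base_coeffs]; norm_num
  · rw [Finset.card_filter, Fin.sum_univ_four]; norm_num [Matrix.cons_val_two, Matrix.cons_val_three]
  · rw [Finset.card_filter, Fin.sum_univ_four]; norm_num [Matrix.cons_val_two, Matrix.cons_val_three]
  · rw [Finset.card_filter, Fin.sum_univ_four]; norm_num [Matrix.cons_val_two, Matrix.cons_val_three]


lemma iter (k u v w : ℕ) (h : RealizesCouple 6 3 2 2 u v w) :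
    RealizesCouple (k+6) (k+3) 2 2 u v (w+k) := by
  induction k with
  | zero => exact h
  | succ k ih => exact step k u v (w+k) ih

/-- Theorem 1 (2): for `d ≥ 6` and `m = d - 3`, the ten couples
`(Σ_{m,2,2}, (u,v,m+1-u-v))` with `u + v ≤ 3`, as well as the couple
`(Σ_{m,2,2}, (0,4,m-3))`, are realizable. -/
theorem stmt1 (d : ℕ) (hd : 6 ≤ d) :
    (∀ u v : ℕ, u + v ≤ 3 → RealizesCouple d (d - 3) 2 2 u v (d - 2 - u - v)) ∧
    RealizesCouple d (d - 3) 2 2 0 4 (d - 3 - 3) := by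
  constructor
  · intro u v huv
    have h6 : RealizesCouple 6 3 2 2 u v (4 - u - v) := by
      have hu3 : u ≤ 3 := by omega
      have hv3 : v ≤ 3 := by omega
      interval_cases u <;> interval_cases v <;>
        first
          | exact inst_0_0_4 | exact inst_0_1_3 | exact inst_0_2_2 | exact inst_0_3_1
          | exact inst_1_0_3 | exact inst_1_1_2 | exact inst_1_2_1
          | exact inst_2_0_2 | exact inst_2_1_1 | exact inst_3_0_1
          | exact absurd huv (by norm_num)
    have h := iter (d-6) u v (4-u-v) h6
    have e1 : d - 6 + 6 = d := by omega
    have e2 : d - 6 + 3 = d - 3 := by omega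
    have e3 : 4 - u - v + (d - 6) = d - 2 - u - v := by omega
    rw [e1, e2, e3] at h
    exact h
  · have h := iter (d-6) 0 4 0 inst_0_4_0
    have e1 : d - 6 + 6 = d := by omega
    have e2 : d - 6 + 3 = d - 3 := by omega
    have e3 : 0 + (d - 6) = d - 3 - 3 := by omega
    rw [e1, e2, e3] at h
    exact h
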